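/- Let f(z) ∈ ℤ[[z]] be a formal power series and r ≥ 1 an integer. Then, as formal power series, (−1)^r · W_{−f}^{(r)}(z) = W_f^{(r)}(z) + W_f^{(r/2)}(z²) if r ≡ 2 (mod 4), and (−1)^r · W_{−f}^{(r)}(z) = W_f^{(r)}(z) otherwise; here W_f^{(r/2)}(z²) denotes the substitution of z² into the Witt transform of f of order r/2. -/

import Mathlib

/-- Substitution of `z^d` into a formal power series: `expandPS d f = f(z^d)`. -/
noncomputable def expandPS (d : ℕ) (f : PowerSeries ℚ) : PowerSeries ℚ :=
  PowerSeries.mk fun j => if d ∣ j then PowerSeries.coeff (j / d) f else 0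

/-- The Witt transform `W_f^{(r)}(z) = (1/r) ∑_{d ∣ r} μ(d) f(z^d)^{r/d}`;
its `j`-th coefficient is `m_f(j, r)`. -/
noncomputable def witt (f : PowerSeries ℚ) (r : ℕ) : PowerSeries ℚ :=
  (1 / (r : ℚ)) • ∑ d ∈ r.divisors,
    ((ArithmeticFunction.moebius d : ℤ) : ℚ) • (expandPS d f) ^ (r / d)

open Finset PowerSeries

lemma coeff_expandPS (d j : ℕ) (f : PowerSeries ℚ) :
    PowerSeries.coeff j (expandPS d f) =
      if d ∣ j then PowerSeries.coeff (j / d) f else 0 := by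
  simp [expandPS]

lemma expandPS_add (d : ℕ) (f g : PowerSeries ℚ) :
    expandPS d (f + g) = expandPS d f + expandPS d g := by
  ext j
  simp only [coeff_expandPS, map_add]
  split_ifs <;> simp

lemma expandPS_smul (d : ℕ) (a : ℚ) (f : PowerSeries ℚ) :
    expandPS d (a • f) = a • expandPS d f := by
  ext j
  simp only [coeff_expandPS, map_smul, smul_eq_mul]
  split_ifs <;> simp

lemma expandPS_neg (d : ℕ) (f : PowerSeries ℚ) :
    expandPS d (-f) = - expandPS d f := by
  ext j
  simp only [coeff_expandPS, map_neg]
  split_ifs <;> simp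

/-- `expandPS d` as a linear map. -/
noncomputable def expandLM (d : ℕ) : PowerSeries ℚ →ₗ[ℚ] PowerSeries ℚ where
  toFun := expandPS d
  map_add' := expandPS_add d
  map_smul' := expandPS_smul d

lemma expandPS_one (d : ℕ) (hd : d ≠ 0) : expandPS d 1 = 1 := by
  ext j
  simp only [coeff_expandPS, PowerSeries.coeff_one]
  by_cases hj : j = 0
  · subst hj
    simp
  · rw [if_neg hj]
    by_cases h1 : d ∣ j
    · rw [if_pos h1, if_neg ?_]
      obtain ⟨c, rfl⟩ := h1
      rw [Nat.mul_div_cancel_left _ (Nat.pos_of_ne_zero hd)]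
      rintro rfl
      simp at hj
    · rw [if_neg h1]

lemma expandPS_mul (d : ℕ) (hd : d ≠ 0) (f g : PowerSeries ℚ) :
    expandPS d (f * g) = expandPS d f * expandPS d g := by
  have hd' := Nat.pos_of_ne_zero hd
  ext n
  rw [PowerSeries.coeff_mul]
  have hrw : ∀ p ∈ Finset.HasAntidiagonal.antidiagonal n,
      PowerSeries.coeff p.1 (expandPS d f) * PowerSeries.coeff p.2 (expandPS d g) =
        if d ∣ p.1 ∧ d ∣ p.2 then
          PowerSeries.coeff (p.1 / d) f * PowerSeries.coeff (p.2 / d) g else 0 := by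
    intro p _
    simp only [coeff_expandPS]
    split_ifs with h1 h2 h3 <;> simp_all
  rw [Finset.sum_congr rfl hrw, Finset.sum_ite, Finset.sum_const_zero, add_zero,
    coeff_expandPS]
  by_cases h : d ∣ n
  · rw [if_pos h, PowerSeries.coeff_mul]
    refine Finset.sum_nbij' (fun q => (d * q.1, d * q.2)) (fun p => (p.1 / d, p.2 / d))
      ?_ ?_ ?_ ?_ ?_
    · intro q hq
      simp only [Finset.HasAntidiagonal.mem_antidiagonal] at hq
      simp only [Finset.mem_filter, Finset.HasAntidiagonal.mem_antidiagonal]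
      refine ⟨?_, Dvd.intro _ rfl, Dvd.intro _ rfl⟩
      rw [← Nat.mul_add, hq, Nat.mul_div_cancel' h]
    · intro p hp
      simp only [Finset.mem_filter, Finset.HasAntidiagonal.mem_antidiagonal] at hp
      obtain ⟨hsum, ⟨a, ha⟩, ⟨b, hb⟩⟩ := hp
      simp only [Finset.HasAntidiagonal.mem_antidiagonal, ha, hb, Nat.mul_div_cancel_left _ hd']
      have hn : n = d * (a + b) := by rw [← hsum, ha, hb]; ring
      rw [hn, Nat.mul_div_cancel_left _ hd']
    · intro q _
      simp [Nat.mul_div_cancel_left _ hd']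
    · intro p hp
      simp only [Finset.mem_filter, Finset.HasAntidiagonal.mem_antidiagonal] at hp
      obtain ⟨-, h1, h2⟩ := hp
      simp [Nat.mul_div_cancel' h1, Nat.mul_div_cancel' h2]
    · intro q _
      simp [Nat.mul_div_cancel_left _ hd']
  · rw [if_neg h]
    symm
    apply Finset.sum_eq_zero
    intro p hp
    simp only [Finset.mem_filter, Finset.HasAntidiagonal.mem_antidiagonal] at hp
    exact absurd (hp.1 ▸ dvd_add hp.2.1 hp.2.2) h

lemma expandPS_pow (d : ℕ) (hd : d ≠ 0) (f : PowerSeries ℚ) (n : ℕ) :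
    expandPS d (f ^ n) = expandPS d f ^ n := by
  induction n with
  | zero => simpa using expandPS_one d hd
  | succ n ih => rw [pow_succ, expandPS_mul d hd, ih, pow_succ]

lemma expandPS_expandPS (d e : ℕ) (hd : d ≠ 0) (he : e ≠ 0) (f : PowerSeries ℚ) :
    expandPS d (expandPS e f) = expandPS (d * e) f := by
  ext j
  simp only [coeff_expandPS]
  by_cases h1 : d ∣ j
  · rw [if_pos h1, Nat.div_div_eq_div_mul]
    by_cases h2 : e ∣ j / d
    · rw [if_pos h2, if_pos ((Nat.dvd_div_iff_mul_dvd h1).mp h2)]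
    · rw [if_neg h2, if_neg (fun h => h2 ((Nat.dvd_div_iff_mul_dvd h1).mpr h))]
  · rw [if_neg h1, if_neg (fun h => h1 (dvd_of_mul_right_dvd h))]

lemma neg_one_pow_rat (n : ℕ) : (-1 : ℚ) ^ n = if n % 2 = 0 then 1 else -1 := by
  rcases Nat.even_or_odd n with h | h
  · rw [h.neg_one_pow, if_pos (Nat.even_iff.mp h)]
  · rw [h.neg_one_pow, if_neg (by rw [Nat.odd_iff] at h; omega)]

/-- For `f ∈ ℤ[[z]]` and `r ≥ 1`:
`(-1)^r W_{-f}^{(r)}(z) = W_f^{(r)}(z) + W_f^{(r/2)}(z^2)` if `r ≡ 2 (mod 4)`,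
and `(-1)^r W_{-f}^{(r)}(z) = W_f^{(r)}(z)` otherwise. -/
theorem neg_one_pow_smul_witt_neg (f : PowerSeries ℚ)
    (hf : ∀ j, ∃ n : ℤ, PowerSeries.coeff j f = n) (r : ℕ) (hr : 1 ≤ r) :
    (-1 : ℚ) ^ r • witt (-f) r =
      if r % 4 = 2 then witt f r + expandPS 2 (witt f (r / 2)) else witt f r := by
  have hr0 : r ≠ 0 := by omega
  -- normalize the left-hand side
  have hterm : ∀ d ∈ r.divisors,
      (-1 : ℚ) ^ r • (((ArithmeticFunction.moebius d : ℤ) : ℚ) • (expandPS d (-f)) ^ (r / d)) =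
        ((-1 : ℚ) ^ (r + r / d) * ((ArithmeticFunction.moebius d : ℤ) : ℚ)) •
          (expandPS d f) ^ (r / d) := by
    intro d _
    rw [expandPS_neg, ← neg_one_smul ℚ (expandPS d f), smul_pow, smul_smul, smul_smul,
      pow_add]
    congr 1
    ring
  have hLHS : (-1 : ℚ) ^ r • witt (-f) r =
      (1 / (r : ℚ)) • ∑ d ∈ r.divisors,
        ((-1 : ℚ) ^ (r + r / d) * ((ArithmeticFunction.moebius d : ℤ) : ℚ)) •
          (expandPS d f) ^ (r / d) := by
    rw [witt, smul_comm, Finset.smul_sum, Finset.sum_congr rfl hterm]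
  by_cases h2 : r % 4 = 2
  · rw [if_pos h2, hLHS]
    set m := r / 2 with hm
    have hrm : r = 2 * m := by omega
    have hmodd : m % 2 = 1 := by omega
    have hm0 : m ≠ 0 := by omega
    -- split each term according to parity of d
    have hsplit : ∀ d ∈ r.divisors,
        ((-1 : ℚ) ^ (r + r / d) * ((ArithmeticFunction.moebius d : ℤ) : ℚ)) •
            (expandPS d f) ^ (r / d) =
          ((ArithmeticFunction.moebius d : ℤ) : ℚ) • (expandPS d f) ^ (r / d) +
          (if 2 ∣ d then ((-2 : ℚ) * ((ArithmeticFunction.moebius d : ℤ) : ℚ)) •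
            (expandPS d f) ^ (r / d) else 0) := by
      intro d hd
      obtain ⟨hdr, -⟩ := Nat.mem_divisors.mp hd
      have hd0 : d ≠ 0 := by rintro rfl; exact hr0 (Nat.eq_zero_of_zero_dvd hdr)
      by_cases hpar : 2 ∣ d
      · -- r / d is odd
        obtain ⟨e, rfl⟩ := hpar
        have he : e ∣ m := by
          have h' : 2 * e ∣ 2 * m := hrm ▸ hdr
          exact (Nat.mul_dvd_mul_iff_left (by norm_num : 0 < 2)).mp h'
        have hre : r / (2 * e) = m / e := by
          rw [hrm, Nat.mul_div_mul_left _ _ (by norm_num : 0 < 2)]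
        have he0 : e ≠ 0 := by omega
        have hodd : (m / e) % 2 = 1 := by
          obtain ⟨c, hc⟩ := he
          rw [hc, Nat.mul_div_cancel_left _ (Nat.pos_of_ne_zero he0)]
          rcases Nat.even_or_odd c with hcc | hcc
          · exfalso; obtain ⟨t, ht⟩ := hcc
            have : m = 2 * (e * t) := by rw [hc, ht]; ring
            omega
          · exact Nat.odd_iff.mp hcc
        rw [if_pos ⟨e, rfl⟩, neg_one_pow_rat, if_neg (by rw [hre]; omega), ← add_smul]
        congr 1
        ring
      · -- d odd, r / d is even
        have hcop : Nat.Coprime 2 d := (Nat.prime_two.coprime_iff_not_dvd).mpr hpar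
        have hdm : d ∣ m := by
          have h' : d ∣ m * 2 := by rw [mul_comm]; exact hrm ▸ hdr
          exact (Nat.Coprime.dvd_of_dvd_mul_right (Nat.coprime_comm.mp hcop) h')
        have heven : (r + r / d) % 2 = 0 := by
          obtain ⟨c, hc⟩ := hdm
          have hrd : r / d = 2 * c := by
            rw [hrm, hc, show 2 * (d * c) = d * (2 * c) by ring,
              Nat.mul_div_cancel_left _ (Nat.pos_of_ne_zero hd0)]
          omega
        rw [if_neg hpar, neg_one_pow_rat, if_pos heven, one_mul, add_zero]
    rw [Finset.sum_congr rfl hsplit, Finset.sum_add_distrib, smul_add]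
    congr 1
    -- the correction sum equals expandPS 2 (witt f m)
    rw [Finset.sum_ite, Finset.sum_const_zero, add_zero]
    have hbij : ∑ d ∈ r.divisors.filter (fun d => 2 ∣ d),
        ((-2 : ℚ) * ((ArithmeticFunction.moebius d : ℤ) : ℚ)) • (expandPS d f) ^ (r / d) =
        ∑ e ∈ m.divisors,
          ((2 : ℚ) * ((ArithmeticFunction.moebius e : ℤ) : ℚ)) •
            expandPS 2 ((expandPS e f) ^ (m / e)) := by
      refine Finset.sum_nbij' (fun d => d / 2) (fun e => 2 * e) ?_ ?_ ?_ ?_ ?_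
      · intro d hd
        simp only [Finset.mem_filter, Nat.mem_divisors] at hd
        obtain ⟨⟨hdr, -⟩, he⟩ := hd
        obtain ⟨e, rfl⟩ := he
        beta_reduce
        rw [Nat.mul_div_cancel_left _ (by norm_num : 0 < 2)]
        exact Nat.mem_divisors.mpr ⟨(Nat.mul_dvd_mul_iff_left (by norm_num : 0 < 2)).mp
          (hrm ▸ hdr), hm0⟩
      · intro e he
        simp only [Nat.mem_divisors] at he
        simp only [Finset.mem_filter, Nat.mem_divisors]
        exact ⟨⟨hrm ▸ Nat.mul_dvd_mul_left 2 he.1, hr0⟩, ⟨e, rfl⟩⟩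
      · intro d hd
        simp only [Finset.mem_filter] at hd
        exact Nat.mul_div_cancel' hd.2
      · intro e _
        beta_reduce
        exact Nat.mul_div_cancel_left _ (by norm_num : 0 < 2)
      · intro d hd
        simp only [Finset.mem_filter, Nat.mem_divisors] at hd
        obtain ⟨⟨hdr, -⟩, he⟩ := hd
        obtain ⟨e, rfl⟩ := he
        beta_reduce
        have he0 : e ≠ 0 := by
          rintro rfl; rw [Nat.mul_zero] at hdr
          exact hr0 (Nat.eq_zero_of_zero_dvd hdr)
        have hem : e ∣ m := (Nat.mul_dvd_mul_iff_left (by norm_num : 0 < 2)).mp (hrm ▸ hdr)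
        have heodd : e % 2 = 1 := by
          rcases Nat.even_or_odd e with hc | hc
          · exfalso
            obtain ⟨t, ht⟩ := hc
            obtain ⟨c, hc'⟩ := hem
            have : m = 2 * (t * c) := by rw [hc', ht]; ring
            omega
          · exact Nat.odd_iff.mp hc
        have hcop : Nat.Coprime 2 e := (Nat.prime_two.coprime_iff_not_dvd).mpr (by omega)
        have hmu : ArithmeticFunction.moebius (2 * e) = - ArithmeticFunction.moebius e := by
          rw [ArithmeticFunction.isMultiplicative_moebius.map_mul_of_coprime hcop]
          simp [ArithmeticFunction.moebius_apply_prime Nat.prime_two]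
        rw [Nat.mul_div_cancel_left _ (by norm_num : 0 < 2), hmu,
          expandPS_pow 2 (by norm_num), expandPS_expandPS 2 e (by norm_num) he0,
          show r / (2 * e) = m / e by
            rw [hrm, Nat.mul_div_mul_left _ _ (by norm_num : 0 < 2)]]
        congr 1
        push_cast
        ring
    rw [hbij]
    have hlin : ∑ e ∈ m.divisors,
        ((2 : ℚ) * ((ArithmeticFunction.moebius e : ℤ) : ℚ)) •
          expandPS 2 ((expandPS e f) ^ (m / e)) =
        (2 : ℚ) • expandLM 2 (∑ e ∈ m.divisors,
          ((ArithmeticFunction.moebius e : ℤ) : ℚ) • (expandPS e f) ^ (m / e)) := by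
      rw [map_sum, Finset.smul_sum]
      refine Finset.sum_congr rfl fun e _ => ?_
      rw [map_smul]
      show _ = (2:ℚ) • (((ArithmeticFunction.moebius e : ℤ) : ℚ) •
        expandPS 2 ((expandPS e f) ^ (m / e)))
      rw [smul_smul]
    rw [hlin, witt]
    show (1 / (r:ℚ)) • ((2:ℚ) • expandLM 2 _) = expandLM 2 ((1 / (m:ℚ)) • _)
    rw [map_smul, smul_smul]
    congr 1
    have hrq : (r : ℚ) = 2 * (m : ℚ) := by exact_mod_cast congrArg Nat.cast hrm
    have hm0' : (m : ℚ) ≠ 0 := Nat.cast_ne_zero.mpr hm0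
    rw [hrq]
    field_simp
  · rw [if_neg h2, hLHS, witt]
    congr 1
    refine Finset.sum_congr rfl fun d hd => ?_
    obtain ⟨hdr, -⟩ := Nat.mem_divisors.mp hd
    have hd0 : d ≠ 0 := by rintro rfl; exact hr0 (Nat.eq_zero_of_zero_dvd hdr)
    by_cases hsq : Squarefree d
    · -- show r + r/d is even
      have heven : (r + r / d) % 2 = 0 := by
        obtain ⟨k, hk⟩ := hdr
        have hkd : r / d = k := by rw [hk, Nat.mul_div_cancel_left _ (Nat.pos_of_ne_zero hd0)]
        rw [hkd]
        rcases Nat.even_or_odd r with hre | hro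
        · rw [Nat.even_iff] at hre
          have h4 : r % 4 = 0 := by omega
          rcases Nat.even_or_odd k with hke | hko
          · rw [Nat.even_iff] at hke; omega
          · exfalso
            rw [Nat.odd_iff] at hko
            have h2k : Nat.Coprime 2 k := (Nat.prime_two.coprime_iff_not_dvd).mpr (by omega)
            have hcop : Nat.Coprime 4 k := by
              have := Nat.Coprime.mul h2k h2k
              rwa [show (2:ℕ) * 2 = 4 by norm_num] at this
            have h4r : 4 ∣ d * k := by rw [← hk]; omega
            have h4d : 4 ∣ d := hcop.dvd_of_dvd_mul_right h4r
            obtain ⟨u, hu⟩ := h4d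
            have hsq2 : (2 : ℕ) * 2 ∣ d := ⟨u, by omega⟩
            have := hsq 2 hsq2
            norm_num at this
        · rw [Nat.odd_iff] at hro
          rcases Nat.even_or_odd k with hke | hko
          · exfalso
            obtain ⟨t, ht⟩ := hke
            have : r = 2 * (d * t) := by rw [hk, ht]; ring
            omega
          · rw [Nat.odd_iff] at hko; omega
      rw [neg_one_pow_rat, if_pos heven, one_mul]
    · rw [ArithmeticFunction.moebius_eq_zero_of_not_squarefree hsq]
      simp
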